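/- Let Ω/k be a field extension with Ω algebraically closed and X an algebraic variety over k. If X(k) is Zariski dense in X, then X(k) (viewed in X_Ω(Ω)) is Zariski dense in the base change X_Ω. -/

import Mathlib

open scoped TensorProduct

/-!
STATEMENT 13: Let Ω/k be a field extension with Ω algebraically closed and X an
(affine) algebraic variety over k, with coordinate ring R (a reduced finitely generated
k-algebra).  If X(k) is Zariski dense in X, then X(k), viewed inside X_Ω(Ω), is Zariski
dense in the base change X_Ω: no proper closed subscheme of X_Ω contains all these points.
-/

noncomputable section

variable (k Ω : Type) [Field k] [Field Ω] [Algebra k Ω]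
variable (R : Type) [CommRing R] [Algebra k R]

/-- Evaluation of `Ω ⊗[k] R` at a `k`-point `x : R →ₐ[k] k`, i.e. the corresponding
`Ω`-point of the base change. -/
def evalPt (x : R →ₐ[k] k) : Ω ⊗[k] R →ₐ[k] Ω :=
  (Algebra.TensorProduct.rid k k Ω).toAlgHom.comp
    (Algebra.TensorProduct.map (AlgHom.id k Ω) x)

theorem stmt13 [IsAlgClosed Ω]
    (hfg : Algebra.FiniteType k R) [IsReduced R]
    -- X(k) is Zariski dense in X: the only closed subscheme of X containing all k-points
    -- is X itself.
    (hdense : ∀ I : Ideal R, (∀ x : R →ₐ[k] k, ∀ f ∈ I, x f = 0) → I = ⊥) :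
    -- then X(k) is Zariski dense in X_Ω.
    ∀ J : Ideal (Ω ⊗[k] R), (∀ x : R →ₐ[k] k, ∀ f ∈ J, evalPt k Ω R x f = 0) → J = ⊥ := by
  classical
  intro J hJ
  -- The ideal of functions vanishing at all k-points is ⊥.
  set I : Ideal R := ⨅ x : R →ₐ[k] k, RingHom.ker (x : R →+* k) with hI
  have hIbot : I = ⊥ := by
    apply hdense
    intro x f hf
    exact RingHom.mem_ker.1 ((Ideal.mem_iInf.1 hf) x)
  -- A basis of Ω over k.
  let b : Module.Basis (Module.Basis.ofVectorSpaceIndex k Ω) k Ω := Module.Basis.ofVectorSpace k Ω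
  set ι := Module.Basis.ofVectorSpaceIndex k Ω
  let e : Ω ⊗[k] R ≃ₗ[k] (ι →₀ R) :=
    (TensorProduct.congr b.repr (LinearEquiv.refl k R)).trans
      (TensorProduct.finsuppScalarLeft k R ι)
  rw [Submodule.eq_bot_iff]
  intro f hf
  set g : ι →₀ R := e f with hg
  -- f = Σ b i ⊗ g i
  have hfe : f = g.sum fun i r => (b i) ⊗ₜ[k] r := by
    have h1 : f = e.symm g := by simp [hg]
    have h2 : e.symm g = g.sum fun i r => e.symm (Finsupp.single i r) := by
      conv_lhs => rw [← Finsupp.sum_single g]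
      exact map_finsuppSum _ _ _
    rw [h1, h2]
    refine Finsupp.sum_congr fun i _ => ?_
    show e.symm (Finsupp.single i (g i)) = _
    simp only [e, LinearEquiv.trans_symm, LinearEquiv.trans_apply,
      TensorProduct.finsuppScalarLeft_symm_apply_single, TensorProduct.congr_symm_tmul,
      LinearEquiv.refl_symm, LinearEquiv.refl_apply, Module.Basis.repr_symm_single_one]
  -- evaluate at a k-point x
  have key : ∀ (x : R →ₐ[k] k) (i : ι), x (g i) = 0 := by
    intro x i
    have h0 : (evalPt k Ω R x) f = 0 := hJ x f hf
    rw [hfe] at h0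
    have hsum : (g.sum fun j r => x r • (b j : Ω)) = 0 := by
      rw [← h0, map_finsuppSum]
      exact Finsupp.sum_congr fun j _ => by
        simp [evalPt, Algebra.TensorProduct.rid_tmul]
    rw [Finsupp.sum] at hsum
    by_cases hi : i ∈ g.support
    · exact linearIndependent_iff'.1 b.linearIndependent g.support (fun j => x (g j)) hsum i hi
    · simp [Finsupp.notMem_support_iff.1 hi]
  -- hence each g i lies in I = ⊥
  have hg0 : g = 0 := by
    ext i
    have hmem : g i ∈ I := Ideal.mem_iInf.2 fun x => RingHom.mem_ker.2 (key x i)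
    rw [hIbot] at hmem
    simpa using hmem
  rw [hfe, hg0]
  simp

end
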